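/- Error propagation in the greedy multi-layer pursuit: suppose ‖γ̂_L − γ_L‖₂² ≤ E_L² with supp(γ̂_L) ⊆ supp(γ_L) and ‖γ_L‖ˢ_{0,∞} ≤ λ_L, and set γ̂_{i−1} = D_i γ̂_i for i = L,…,1 where γ_{i−1} = D_i γ_i. If each D_i has Stripe-RIP constant δ_{2λ_i} ≤ (2λ_i − 1)μ(D_i) and each γ_i satisfies N.V.S. for D_i with ‖γ_i‖ˢ_{0,∞} ≤ λ_i < ½(1 + 1/μ(D_i)), then for every i: supp(γ̂_i) ⊆ supp(γ_i) and ‖γ̂_i − γ_i‖₂² ≤ E_L² · (3/2)^{L−i}. -/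

import Mathlib

/-- The stripe `ℓ_{0,∞}` pseudo-norm: maximal number of non-zeros in a stripe. -/
noncomputable def stripeSp {m s : ℕ} (St : Fin s → Finset (Fin m)) (γ : Fin m → ℝ) : ℕ :=
  Finset.univ.sup fun j => ((St j).filter fun t => γ t ≠ 0).card

/-- The mutual coherence of a matrix. -/
noncomputable def mutualCoherence {N M : ℕ} (D : Matrix (Fin N) (Fin M) ℝ) : ℝ :=
  sSup {x : ℝ | ∃ i j : Fin M, i ≠ j ∧ x = |∑ r, D r i * D r j|}

/-- Squared Euclidean norm. -/
def nsq {m : ℕ} (v : Fin m → ℝ) : ℝ := ∑ j, (v j) ^ 2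

/-- The Non-Vanishing-Support (N.V.S.) property: `‖Dγ‖₀` equals the number of non-zero rows of
`D_T`, where `T = supp(γ)`. -/
lemma mutualCoherence_nonneg {N M : ℕ} (D : Matrix (Fin N) (Fin M) ℝ) :
    0 ≤ mutualCoherence D := by
  unfold mutualCoherence
  rcases Set.eq_empty_or_nonempty
      {x : ℝ | ∃ i j : Fin M, i ≠ j ∧ x = |∑ r, D r i * D r j|} with h | ⟨a, ha⟩
  · simp [h]
  · obtain ⟨i, j, hij, rfl⟩ := ha
    have hb : BddAbove {x : ℝ | ∃ i j : Fin M, i ≠ j ∧ x = |∑ r, D r i * D r j|} := by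
      apply Set.Finite.bddAbove
      apply Set.Finite.subset
        (Set.finite_range fun p : Fin M × Fin M => |∑ r, D r p.1 * D r p.2|)
      rintro x ⟨i, j, _, rfl⟩; exact ⟨(i, j), rfl⟩
    exact le_trans (abs_nonneg _) (le_csSup hb ⟨i, j, hij, rfl⟩)

lemma nsq_nonneg {m : ℕ} (v : Fin m → ℝ) : 0 ≤ nsq v :=
  Finset.sum_nonneg fun _ _ => sq_nonneg _

open Classical in
def NVS {N M : ℕ} (D : Matrix (Fin N) (Fin M) ℝ) (γ : Fin M → ℝ) : Prop :=
  (Finset.univ.filter fun r => D.mulVec γ r ≠ 0).card =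
    (Finset.univ.filter fun r : Fin N => ∃ c, γ c ≠ 0 ∧ D r c ≠ 0).card

/-- Error propagation in the greedy multi-layer pursuit: if the deepest estimate satisfies
`supp(γ̂_L) ⊆ supp(γ_L)` and `‖γ̂_L - γ_L‖₂² ≤ E_L²`, the estimates propagate by
`γ̂_{i-1} = Dᵢ γ̂ᵢ` (as do the true representations), each `γᵢ` satisfies N.V.S. for `Dᵢ` with
`‖γᵢ‖ˢ_{0,∞} ≤ λᵢ < ½(1 + 1/μ(Dᵢ))`, and each `Dᵢ` satisfies the Stripe-RIP bound
`‖Dᵢw‖₂² ≤ (1 + (λᵢ - 1)μ(Dᵢ))‖w‖₂²` on `λᵢ`-stripe-sparse vectors, then for every layer `i`: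
`supp(γ̂ᵢ) ⊆ supp(γᵢ)` and `‖γ̂ᵢ - γᵢ‖₂² ≤ E_L² (3/2)^{L-i}`.
(Here `D j` is the paper's `D_{j+1}`, and `γ (j+1)` the paper's `γ_{j+1}`.) -/
theorem stmt_10 (L : ℕ) (hL : 1 ≤ L) (n : ℕ → ℕ)
    (D : (i : ℕ) → Matrix (Fin (n i)) (Fin (n (i + 1))) ℝ)
    (s : ℕ → ℕ) (St : (i : ℕ) → Fin (s i) → Finset (Fin (n i)))
    (lam : ℕ → ℕ) (EL : ℝ)
    (γ γh : (i : ℕ) → Fin (n i) → ℝ)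
    (hchain : ∀ j < L, γ j = (D j).mulVec (γ (j + 1)))
    (hhchain : ∀ j < L, γh j = (D j).mulVec (γh (j + 1)))
    (hsuppL : ∀ t, γh L t ≠ 0 → γ L t ≠ 0)
    (herrL : nsq (fun t => γh L t - γ L t) ≤ EL ^ 2)
    (hsp : ∀ i, 1 ≤ i → i ≤ L → stripeSp (St i) (γ i) ≤ lam i)
    (hcoh : ∀ j < L, (lam (j + 1) : ℝ) < (1 + 1 / mutualCoherence (D j)) / 2)
    (hNVS : ∀ j < L, NVS (D j) (γ (j + 1)))
    (hSRIP : ∀ j < L, ∀ w : Fin (n (j + 1)) → ℝ, stripeSp (St (j + 1)) w ≤ lam (j + 1) →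
      nsq ((D j).mulVec w) ≤
        (1 + ((lam (j + 1) : ℝ) - 1) * mutualCoherence (D j)) * nsq w) :
    ∀ i, 1 ≤ i → i ≤ L →
      (∀ t, γh i t ≠ 0 → γ i t ≠ 0) ∧
        nsq (fun t => γh i t - γ i t) ≤ EL ^ 2 * (3 / 2 : ℝ) ^ (L - i) := by
  intro i h1 hiL
  classical
  obtain ⟨k, hk⟩ : ∃ k, i + k = L := ⟨L - i, by omega⟩
  induction k generalizing i with
  | zero =>
    have : i = L := by omega
    subst this
    simpa using ⟨hsuppL, herrL⟩
  | succ k ih =>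
    have hiL' : i < L := by omega
    obtain ⟨ihsupp, iherr⟩ := ih (i + 1) (by omega) (by omega) (by omega)
    have hci := hchain i hiL'
    have hhi := hhchain i hiL'
    -- support step, using NVS
    have hAB : (Finset.univ.filter fun r => (D i).mulVec (γ (i + 1)) r ≠ 0) =
        (Finset.univ.filter fun r : Fin (n i) => ∃ c, γ (i + 1) c ≠ 0 ∧ D i r c ≠ 0) := by
      apply Finset.eq_of_subset_of_card_le
      · intro r hr
        simp only [Finset.mem_filter, Finset.mem_univ, true_and] at hr ⊢
        simp only [Matrix.mulVec, dotProduct] at hr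
        obtain ⟨c, -, hc⟩ := Finset.exists_ne_zero_of_sum_ne_zero hr
        exact ⟨c, right_ne_zero_of_mul hc, left_ne_zero_of_mul hc⟩
      · exact le_of_eq (hNVS i hiL').symm
    have hsupp : ∀ t, γh i t ≠ 0 → γ i t ≠ 0 := by
      intro t ht
      rw [hhi] at ht
      simp only [Matrix.mulVec, dotProduct] at ht
      obtain ⟨c, -, hc⟩ := Finset.exists_ne_zero_of_sum_ne_zero ht
      have htB : t ∈ (Finset.univ.filter fun r : Fin (n i) =>
          ∃ c, γ (i + 1) c ≠ 0 ∧ D i r c ≠ 0) := by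
        simp only [Finset.mem_filter, Finset.mem_univ, true_and]
        exact ⟨c, ihsupp c (right_ne_zero_of_mul hc), left_ne_zero_of_mul hc⟩
      rw [← hAB] at htB
      simp only [Finset.mem_filter, Finset.mem_univ, true_and] at htB
      rw [hci]; exact htB
    refine ⟨hsupp, ?_⟩
    -- error step
    set w : Fin (n (i + 1)) → ℝ := fun t => γh (i + 1) t - γ (i + 1) t with hw
    have hspw : stripeSp (St (i + 1)) w ≤ lam (i + 1) := by
      refine le_trans ?_ (hsp (i + 1) (by omega) (by omega))
      apply Finset.sup_mono_fun
      intro j _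
      apply Finset.card_le_card
      apply Finset.monotone_filter_right
      intro t _ ht
      by_contra h
      have hγh : γh (i + 1) t = 0 := by
        by_contra hh; exact (ihsupp t hh) h
      exact ht (by simp [hw, h, hγh])
    have hdiff : (fun t => γh i t - γ i t) = (D i).mulVec w := by
      funext t
      rw [hci, hhi]
      simp [Matrix.mulVec, dotProduct, hw, mul_sub, Finset.sum_sub_distrib]
    have hfac : 1 + ((lam (i + 1) : ℝ) - 1) * mutualCoherence (D i) ≤ 3 / 2 := by
      have hμ := mutualCoherence_nonneg (D i)
      have hc := hcoh i hiL'
      rcases eq_or_lt_of_le hμ with h0 | h0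
      · rw [← h0]; norm_num
      · have h1μ : (1 / mutualCoherence (D i)) * mutualCoherence (D i) = 1 :=
          one_div_mul_cancel (ne_of_gt h0)
        nlinarith [mul_lt_mul_of_pos_right hc h0]
    have hrip := hSRIP i hiL' w hspw
    rw [hdiff]
    calc nsq ((D i).mulVec w) ≤
        (1 + ((lam (i + 1) : ℝ) - 1) * mutualCoherence (D i)) * nsq w := hrip
      _ ≤ (3 / 2) * nsq w := mul_le_mul_of_nonneg_right hfac (nsq_nonneg w)
      _ ≤ (3 / 2) * (EL ^ 2 * (3 / 2 : ℝ) ^ (L - (i + 1))) := by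
          have := iherr; nlinarith
      _ = EL ^ 2 * (3 / 2 : ℝ) ^ (L - i) := by
          have : L - i = (L - (i + 1)) + 1 := by omega
          rw [this, pow_succ]; ring
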